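/- Let A be an m×n matrix with entries in [0,1], c ∈ ℝ_{≥0}^n, x ∈ ℝ_{≥0}^n, i ∈ [m], and θ ∈ (0,1] such that ∑_{j : A_{i,j} ≥ θ} A_{i,j} x_j ≥ 1/2. Then there exists z ∈ ℕ^n with ∑_{j=1}^n A_{i,j} z_j ≥ 1, ⟨c,z⟩ ≤ (4/θ)·∑_{j=1}^n c_j A_{i,j} x_j, and z_j ≤ ⌈4 x_j⌉ for every j ∈ [n]. -/

import Mathlib

lemma aux_greedy {n : ℕ} (a c x : Fin n → ℝ) (hc : ∀ j, 0 ≤ c j) (hx : ∀ j, 0 ≤ x j) :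
    ∀ S : Finset (Fin n), ∀ T ρ : ℝ, 0 < T → 0 ≤ ρ →
    (∀ j ∈ S, 0 < a j) → (∀ j ∈ S, a j ≤ 1) → (∀ j ∈ S, ρ ≤ c j / a j) →
    T + 1 ≤ ∑ j ∈ S, 4 * (a j * x j) →
    ∃ z : Fin n → ℕ, (∀ j, z j ≤ ⌈4 * x j⌉₊) ∧ (∀ j, j ∉ S → z j = 0) ∧
      T ≤ ∑ j ∈ S, a j * (z j : ℝ) ∧ ∑ j ∈ S, a j * (z j : ℝ) ≤ T + 1 ∧
      ∑ j ∈ S, c j * (z j : ℝ) ≤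
        (∑ j ∈ S, 4 * (c j * x j)) - ρ * ((∑ j ∈ S, 4 * (a j * x j)) - (T + 1)) := by
  intro S
  induction S using Finset.strongInduction with
  | _ S IH =>
    intro T ρ hT hρ hapos hale hρle hB
    have hSne : S.Nonempty := by
      rcases S.eq_empty_or_nonempty with h | h
      · exfalso; rw [h] at hB; simp at hB; linarith
      · exact h
    obtain ⟨j₀, hj₀S, hj₀min⟩ := S.exists_min_image (fun j => c j / a j) hSne
    have ha0 : 0 < a j₀ := hapos _ hj₀S
    set r : ℝ := c j₀ / a j₀ with hr
    have hr0 : 0 ≤ r := div_nonneg (hc j₀) ha0.le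
    have hrρ : ρ ≤ r := hρle _ hj₀S
    have hcr : c j₀ = r * a j₀ := by rw [hr, div_mul_cancel₀ _ ha0.ne']
    -- lower bound for the "fractional cost" sum by r times the coverage sum
    have hfrac : r * (∑ j ∈ S, 4 * (a j * x j)) ≤ ∑ j ∈ S, 4 * (c j * x j) := by
      rw [Finset.mul_sum]
      apply Finset.sum_le_sum
      intro j hj
      have haj := hapos _ hj
      have h1 : r ≤ c j / a j := hj₀min _ hj
      have h2 : c j / a j * a j = c j := div_mul_cancel₀ _ haj.ne'
      nlinarith [hx j, haj, mul_le_mul_of_nonneg_right h1 (mul_nonneg haj.le (hx j))]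
    have hBpos : 0 ≤ (∑ j ∈ S, 4 * (a j * x j)) - (T + 1) := by linarith
    by_cases h1 : T ≤ a j₀ * (⌈4 * x j₀⌉₊ : ℝ)
    · -- finish with a single coordinate
      set t : ℕ := ⌈T / a j₀⌉₊ with ht
      have htle : (t : ℝ) ≤ (⌈4 * x j₀⌉₊ : ℝ) := by
        have : T / a j₀ ≤ (⌈4 * x j₀⌉₊ : ℝ) := by
          rw [div_le_iff₀ ha0]; nlinarith
        exact_mod_cast Nat.cast_le.mpr (Nat.ceil_le.mpr this)
      have hTat : T ≤ a j₀ * t := by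
        calc T = a j₀ * (T / a j₀) := by field_simp
        _ ≤ a j₀ * t := mul_le_mul_of_nonneg_left (Nat.le_ceil _) ha0.le
      have hatT : a j₀ * t ≤ T + 1 := by
        have h' : (t : ℝ) < T / a j₀ + 1 := Nat.ceil_lt_add_one (by positivity)
        have h2 := mul_lt_mul_of_pos_left h' ha0
        have h3 : a j₀ * (T / a j₀ + 1) = T + a j₀ := by field_simp
        have h4 := hale _ hj₀S
        linarith
      have hsum : ∀ (f : Fin n → ℝ),
          ∑ j ∈ S, f j * ((if j = j₀ then t else 0 : ℕ) : ℝ) = f j₀ * t := by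
        intro f
        rw [Finset.sum_eq_single_of_mem j₀ hj₀S]
        · simp
        · intro b _ hb; simp [hb]
      refine ⟨fun j => if j = j₀ then t else 0, ?_, ?_, ?_, ?_, ?_⟩
      · intro j
        by_cases hj : j = j₀
        · have : t ≤ ⌈4 * x j₀⌉₊ := Nat.cast_le.mp htle
          simpa [hj] using this
        · simp [hj]
      · intro j hj
        have : j ≠ j₀ := fun h => hj (h ▸ hj₀S)
        simp [this]
      · rw [hsum a]; exact hTat
      · rw [hsum a]; exact hatT
      · rw [hsum c]
        have hct : c j₀ * t = r * (a j₀ * t) := by rw [hcr]; ring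
        nlinarith
    · -- recurse on S.erase j₀
      push_neg at h1
      set w : ℕ := ⌈4 * x j₀⌉₊ with hw
      set T' : ℝ := T - a j₀ * w with hT'
      have hT'pos : 0 < T' := by simp [hT']; linarith
      have hwx : 4 * x j₀ ≤ (w : ℝ) := Nat.le_ceil _
      have hS' : S.erase j₀ ⊂ S := Finset.erase_ssubset hj₀S
      have hsplit : ∀ (f : Fin n → ℝ), ∑ j ∈ S, f j = f j₀ + ∑ j ∈ S.erase j₀, f j := by
        intro f; rw [Finset.add_sum_erase _ _ hj₀S]
      have hB' : T' + 1 ≤ ∑ j ∈ S.erase j₀, 4 * (a j * x j) := by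
        have := hsplit (fun j => 4 * (a j * x j))
        have h4 : 4 * (a j₀ * x j₀) ≤ a j₀ * w := by nlinarith
        simp only [hT']
        linarith
      obtain ⟨z', hz'le, hz'supp, hz'cov1, hz'cov2, hz'cost⟩ :=
        IH _ hS' T' r hT'pos hr0
          (fun j hj => hapos _ (Finset.mem_of_mem_erase hj))
          (fun j hj => hale _ (Finset.mem_of_mem_erase hj))
          (fun j hj => hj₀min _ (Finset.mem_of_mem_erase hj))
          hB'
      have hz'j₀ : z' j₀ = 0 := hz'supp _ (Finset.notMem_erase _ _)
      set z : Fin n → ℕ := Function.update z' j₀ w with hz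
      have hzsum : ∀ (f : Fin n → ℝ),
          ∑ j ∈ S, f j * (z j : ℝ) = f j₀ * w + ∑ j ∈ S.erase j₀, f j * (z' j : ℝ) := by
        intro f
        rw [hsplit (fun j => f j * (z j : ℝ))]
        simp only [hz, Function.update_self]
        congr 1
        apply Finset.sum_congr rfl
        intro j hj
        rw [Function.update_of_ne (Finset.ne_of_mem_erase hj)]
      refine ⟨z, ?_, ?_, ?_, ?_, ?_⟩
      · intro j
        by_cases hj : j = j₀
        · rw [hj]; simp [hz, hw]
        · simp only [hz, Function.update_of_ne hj]; exact hz'le j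
      · intro j hj
        have hne : j ≠ j₀ := fun h => hj (h ▸ hj₀S)
        simp only [hz, Function.update_of_ne hne]
        exact hz'supp _ (fun h => hj (Finset.mem_of_mem_erase h))
      · rw [hzsum a]; simp only [hT'] at hz'cov1; linarith
      · rw [hzsum a]; simp only [hT'] at hz'cov2; linarith
      · rw [hzsum c]
        have e1 := hsplit (fun j => 4 * (c j * x j))
        have e2 := hsplit (fun j => 4 * (a j * x j))
        have hcw : c j₀ * w = r * (a j₀ * w) := by rw [hcr]; ring
        have hkey : ∑ j ∈ S.erase j₀, 4 * (a j * x j)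
            = (∑ j ∈ S, 4 * (a j * x j)) - 4 * (a j₀ * x j₀) := by linarith
        rw [hkey] at hz'cost
        simp only [hT'] at hz'cost
        nlinarith [mul_le_mul_of_nonneg_right hrρ hBpos]
/-- integral fixing vector for a single covering constraint
(Lemma `l1-fixing-cost`). -/
theorem stmt_11 (m n : ℕ) (A : Fin m → Fin n → ℝ) (c x : Fin n → ℝ)
    (i : Fin m) (θ : ℝ)
    (hA : ∀ i' j, A i' j ∈ Set.Icc (0 : ℝ) 1)
    (hc : ∀ j, 0 ≤ c j) (hx : ∀ j, 0 ≤ x j)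
    (hθ : θ ∈ Set.Ioc (0 : ℝ) 1)
    (hbig : 1 / 2 ≤ ∑ j ∈ Finset.univ.filter (fun j => θ ≤ A i j), A i j * x j) :
    ∃ z : Fin n → ℕ,
      1 ≤ ∑ j, A i j * (z j : ℝ) ∧
      ∑ j, c j * (z j : ℝ) ≤ (4 / θ) * ∑ j, c j * A i j * x j ∧
      ∀ j, z j ≤ ⌈4 * x j⌉₊ := by
  obtain ⟨hθ0, hθ1⟩ := hθ
  set S : Finset (Fin n) := Finset.univ.filter (fun j => θ ≤ A i j) with hS
  have hmem : ∀ j ∈ S, θ ≤ A i j := by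
    intro j hj; exact (Finset.mem_filter.mp hj).2
  have hB : (1 : ℝ) + 1 ≤ ∑ j ∈ S, 4 * (A i j * x j) := by
    have : ∑ j ∈ S, 4 * (A i j * x j) = 4 * ∑ j ∈ S, A i j * x j := by
      rw [Finset.mul_sum]
    rw [this]; linarith
  obtain ⟨z, hzle, hzsupp, hzcov, _, hzcost⟩ :=
    aux_greedy (A i) c x hc hx S 1 0 one_pos le_rfl
      (fun j hj => lt_of_lt_of_le hθ0 (hmem j hj))
      (fun j hj => (hA i j).2)
      (fun j hj => div_nonneg (hc j) (hA i j).1)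
      hB
  have hext : ∀ (f : Fin n → ℝ),
      ∑ j ∈ S, f j * (z j : ℝ) = ∑ j, f j * (z j : ℝ) := by
    intro f
    apply Finset.sum_subset (Finset.filter_subset _ _)
    intro j _ hj
    rw [hzsupp j hj]; simp
  refine ⟨z, ?_, ?_, hzle⟩
  · rw [← hext (A i)]; exact hzcov
  · rw [← hext c]
    have h1 : ∑ j ∈ S, c j * (z j : ℝ) ≤ ∑ j ∈ S, 4 * (c j * x j) := by
      simpa using hzcost
    have h2 : ∑ j ∈ S, 4 * (c j * x j) ≤ ∑ j ∈ S, (4 / θ) * (c j * A i j * x j) := by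
      apply Finset.sum_le_sum
      intro j hj
      rw [div_mul_eq_mul_div, le_div_iff₀ hθ0]
      have := hmem j hj
      nlinarith [mul_nonneg (hc j) (hx j)]
    have h3 : ∑ j ∈ S, (4 / θ) * (c j * A i j * x j)
        ≤ ∑ j, (4 / θ) * (c j * A i j * x j) := by
      apply Finset.sum_le_sum_of_subset_of_nonneg (Finset.filter_subset _ _)
      intro j _ _
      have := (hA i j).1
      have := hc j
      have := hx j
      positivity
    rw [Finset.mul_sum]
    calc ∑ j ∈ S, c j * (z j : ℝ) ≤ ∑ j ∈ S, 4 * (c j * x j) := h1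
    _ ≤ ∑ j ∈ S, (4 / θ) * (c j * A i j * x j) := h2
    _ ≤ ∑ j, (4 / θ) * (c j * A i j * x j) := h3
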